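/- Let μ be a σ-finite measure on a measurable space X, let p, p̄ : X → [0,∞) be measurable probability densities with respect to μ with p(x)·p̄(x) = 0 for μ-almost every x, let f : [0,∞) → ℝ be strictly convex with f(1) = 0 and f(0) finite, and let λ ∈ (0,1]. Then over all measurable probability densities q with respect to μ satisfying p(x) = 0 μ-a.e. on {q = 0} and for which the relevant integrands are μ-integrable, the functional q ↦ D_f(p ‖ λq + (1−λ)p̄) attains its minimum value λ f(1/λ) + (1−λ) f(0) at q = p, and every minimizer q satisfies q = p μ-almost everywhere. In particular, the minimizer of the NDA objective q ↦ D_f(p ‖ λq + (1−λ)p̄) coincides (up to μ-a.e. equality) with the minimizer of the original objective q ↦ D_f(p ‖ q), namely p itself. -/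

import Mathlib

open MeasureTheory

/-- generator-side of the paper's Theorem 1.  Fix probability densities
`p, pbar` w.r.t. a σ-finite measure `μ` with disjoint supports, a strictly convex
`f : [0,∞) → ℝ` with `f 1 = 0`, and `λ ∈ (0,1]`.  Over all probability densities `q` with
`p ≪ q` and with the relevant integrands integrable, the NDA objective
`q ↦ D_f(p ‖ λq + (1-λ)pbar)`:
(1) takes the value `λ f(1/λ) + (1-λ) f 0` at `q = p`,
(2) is everywhere `≥ λ f(1/λ) + (1-λ) f 0` (so it attains its minimum at `q = p`),
(3) any minimizer i.e. any `q` attaining this value equals `p` μ-a.e.;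
and, in particular, this minimizer coincides with the minimizer of the original objective
`q ↦ D_f(p ‖ q)`, namely `p` itself:
(4) `D_f(p ‖ p) = 0` and `D_f(p ‖ q) ≥ 0` for every admissible `q`.
(In Lean, division by zero yields `0`, so all the integrands are automatically `0`
whenever the corresponding density vanishes.) -/
lemma exists_support_slope {f : ℝ → ℝ} (hf : StrictConvexOn ℝ (Set.Ici 0) f)
    {a : ℝ} (ha : 0 < a) :
    ∃ c : ℝ, (f a - f 0) / a < c ∧
      (∀ u, 0 ≤ u → f a + c * (u - a) ≤ f u) ∧
      (∀ u, 0 ≤ u → u ≠ a → f a + c * (u - a) < f u) := by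
  set sec : ℝ → ℝ := fun x => (f x - f a) / (x - a) with hsec
  have haI : a ∈ Set.Ici (0 : ℝ) := ha.le
  have hbdd : BddAbove (sec '' Set.Ico 0 a) := by
    refine ⟨sec (a + 1), ?_⟩
    rintro y ⟨x, hx, rfl⟩
    exact hf.convexOn.secant_mono haI hx.1 (by simp; linarith) (ne_of_lt hx.2)
      (by intro h; linarith) (by linarith [hx.2])
  have hne : (sec '' Set.Ico 0 a).Nonempty := ⟨sec 0, 0, ⟨le_refl 0, ha⟩, rfl⟩
  set c := sSup (sec '' Set.Ico 0 a) with hc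
  have hmem : ∀ x, 0 ≤ x → x < a → sec x ≤ c := fun x h1 h2 => le_csSup hbdd ⟨x, ⟨h1, h2⟩, rfl⟩
  have hub : ∀ m, a < m → c ≤ sec m := by
    intro m hm
    refine csSup_le hne ?_
    rintro y ⟨x, hx, rfl⟩
    exact hf.convexOn.secant_mono haI hx.1 (by simp; linarith) (ne_of_lt hx.2)
      (by intro h; linarith) (by linarith [hx.2])
  have hstrict : ∀ u, 0 ≤ u → u ≠ a → f a + c * (u - a) < f u := by
    intro u hu hua
    rcases lt_or_gt_of_ne hua with h | h
    · have hmid1 : u < (u + a) / 2 := by linarith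
      have hmid2 : (u + a) / 2 < a := by linarith
      have h1 : sec u < sec ((u + a) / 2) :=
        hf.secant_strict_mono haI hu (by simp; linarith) (ne_of_lt h) (ne_of_lt hmid2) hmid1
      have h2 : sec u < c := lt_of_lt_of_le h1 (hmem _ (by linarith) hmid2)
      have hua' : u - a < 0 := by linarith
      rw [hsec] at h2
      have := (div_lt_iff_of_neg hua').mp h2
      linarith
    · have hmid1 : a < (a + u) / 2 := by linarith
      have hmid2 : (a + u) / 2 < u := by linarith
      have h1 : sec ((a + u) / 2) < sec u :=
        hf.secant_strict_mono haI (by simp; linarith) (by simpa using hu)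
          (ne_of_gt hmid1) (ne_of_gt h) hmid2
      have h2 : c < sec u := lt_of_le_of_lt (hub _ hmid1) h1
      have hua' : 0 < u - a := by linarith
      rw [hsec] at h2
      have := (lt_div_iff₀ hua').mp h2
      linarith
  refine ⟨c, ?_, ?_, hstrict⟩
  · have h1 : sec 0 < sec (a / 2) :=
      hf.secant_strict_mono haI Set.self_mem_Ici (by simp; linarith) (ne_of_lt ha)
        (by intro hh; linarith) (by linarith)
    have h2 : sec 0 = (f a - f 0) / a := by
      show (f 0 - f a) / (0 - a) = (f a - f 0) / a
      rw [zero_sub, div_neg, ← neg_div, neg_sub]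
    rw [← h2]
    exact lt_of_lt_of_le h1 (hmem _ (by linarith) (by linarith))
  · intro u hu
    rcases eq_or_ne u a with rfl | hua
    · simp
    · exact (hstrict u hu hua).le

theorem stmt_6 {X : Type*} [MeasurableSpace X] (μ : Measure X) [SigmaFinite μ]
    (p pbar : X → ℝ)
    (hpm : Measurable p) (hpbarm : Measurable pbar)
    (hp0 : ∀ x, 0 ≤ p x) (hpbar0 : ∀ x, 0 ≤ pbar x)
    (hp1 : ∫ x, p x ∂μ = 1) (hpbar1 : ∫ x, pbar x ∂μ = 1)
    (hdisj : ∀ᵐ x ∂μ, p x * pbar x = 0)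
    (f : ℝ → ℝ) (hf : StrictConvexOn ℝ (Set.Ici 0) f) (hf1 : f 1 = 0)
    (lam : ℝ) (hlam : lam ∈ Set.Ioc (0 : ℝ) 1) :
    -- (1) the NDA objective takes the value `λ f(1/λ) + (1-λ) f 0` at `q = p`:
    (∫ x, (lam * p x + (1 - lam) * pbar x) *
        f (p x / (lam * p x + (1 - lam) * pbar x)) ∂μ
      = lam * f (1 / lam) + (1 - lam) * f 0)
    ∧
    -- (2) this value is the minimum over all admissible densities `q`:
    (∀ q : X → ℝ, Measurable q → (∀ x, 0 ≤ q x) → (∫ x, q x ∂μ = 1) →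
      (∀ᵐ x ∂μ, q x = 0 → p x = 0) →
      Integrable (fun x =>
        (lam * q x + (1 - lam) * pbar x) * f (p x / (lam * q x + (1 - lam) * pbar x))) μ →
      lam * f (1 / lam) + (1 - lam) * f 0
        ≤ ∫ x, (lam * q x + (1 - lam) * pbar x) *
            f (p x / (lam * q x + (1 - lam) * pbar x)) ∂μ)
    ∧
    -- (3) every minimizer `q` equals `p` μ-a.e.:
    (∀ q : X → ℝ, Measurable q → (∀ x, 0 ≤ q x) → (∫ x, q x ∂μ = 1) →
      (∀ᵐ x ∂μ, q x = 0 → p x = 0) →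
      Integrable (fun x =>
        (lam * q x + (1 - lam) * pbar x) * f (p x / (lam * q x + (1 - lam) * pbar x))) μ →
      (∫ x, (lam * q x + (1 - lam) * pbar x) *
          f (p x / (lam * q x + (1 - lam) * pbar x)) ∂μ
        = lam * f (1 / lam) + (1 - lam) * f 0) →
      ∀ᵐ x ∂μ, q x = p x)
    ∧
    -- (4) `p` is likewise the minimizer of the original objective `q ↦ D_f(p ‖ q)`:
    ((∫ x, p x * f (p x / p x) ∂μ = 0)
      ∧ ∀ q : X → ℝ, Measurable q → (∀ x, 0 ≤ q x) → (∫ x, q x ∂μ = 1) →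
          (∀ᵐ x ∂μ, q x = 0 → p x = 0) →
          Integrable (fun x => q x * f (p x / q x)) μ →
          0 ≤ ∫ x, q x * f (p x / q x) ∂μ) := by
  obtain ⟨hlam0, hlam1⟩ := hlam
  have hpInt : Integrable p μ := by
    by_contra h; rw [integral_undef h] at hp1; norm_num at hp1
  have hpbarInt : Integrable pbar μ := by
    by_contra h; rw [integral_undef h] at hpbar1; norm_num at hpbar1
  have ha : (0 : ℝ) < 1 / lam := by positivity
  obtain ⟨hc0, hcle, hclt⟩ := (exists_support_slope hf ha).choose_spec
  set c := (exists_support_slope hf ha).choose with hcdef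
  have hc0' : lam * (f (1 / lam) - f 0) < c := by
    have : (f (1 / lam) - f 0) / (1 / lam) = lam * (f (1 / lam) - f 0) := by
      rw [one_div, div_inv_eq_mul]; ring
    rw [this] at hc0; exact hc0
  set S : Set X := {x | 0 < p x} with hSdef
  have hSm : MeasurableSet S := measurableSet_lt measurable_const hpm
  have hApbar : ∀ᵐ x ∂μ, x ∈ S → pbar x = 0 := by
    filter_upwards [hdisj] with x hx hxS
    rcases mul_eq_zero.mp hx with h | h
    · exact absurd h (ne_of_gt hxS)
    · exact h
  have hpS : ∫ x in S, p x ∂μ = 1 := by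
    have h0 : ∫ x in Sᶜ, p x ∂μ = 0 := by
      rw [setIntegral_congr_fun hSm.compl
        (fun x hx => le_antisymm (not_lt.mp hx) (hp0 x) : Set.EqOn p (fun _ => (0:ℝ)) Sᶜ)]
      simp
    have := integral_add_compl hSm hpInt
    rw [h0, add_zero] at this
    rw [this, hp1]
  have hpbarS : ∫ x in S, pbar x ∂μ = 0 := by
    have h := (ae_restrict_iff' hSm).mpr hApbar
    rw [integral_congr_ae (h.mono fun x hx => hx : pbar =ᵐ[μ.restrict S] fun _ => (0:ℝ))]
    simp
  -- the key lemma for (2) and (3)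
  have key : ∀ q : X → ℝ, Measurable q → (∀ x, 0 ≤ q x) → (∫ x, q x ∂μ = 1) →
      (∀ᵐ x ∂μ, q x = 0 → p x = 0) →
      Integrable (fun x =>
        (lam * q x + (1 - lam) * pbar x) * f (p x / (lam * q x + (1 - lam) * pbar x))) μ →
      (lam * f (1 / lam) + (1 - lam) * f 0
        ≤ ∫ x, (lam * q x + (1 - lam) * pbar x) *
            f (p x / (lam * q x + (1 - lam) * pbar x)) ∂μ) ∧
      ((∫ x, (lam * q x + (1 - lam) * pbar x) *
          f (p x / (lam * q x + (1 - lam) * pbar x)) ∂μ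
        = lam * f (1 / lam) + (1 - lam) * f 0) → ∀ᵐ x ∂μ, q x = p x) := by
    intro q hqm hq0 hq1 habs hint
    have hqInt : Integrable q μ := by
      by_contra h; rw [integral_undef h] at hq1; norm_num at hq1
    set r : X → ℝ := fun x => lam * q x + (1 - lam) * pbar x with hrdef
    have hrInt : Integrable r μ := (hqInt.const_mul lam).add (hpbarInt.const_mul (1 - lam))
    have hr0 : ∀ x, 0 ≤ r x := fun x =>
      add_nonneg (mul_nonneg hlam0.le (hq0 x)) (mul_nonneg (by linarith) (hpbar0 x))
    have hrint1 : ∫ x, r x ∂μ = 1 := by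
      rw [hrdef]
      rw [integral_add (hqInt.const_mul lam) (hpbarInt.const_mul (1 - lam)),
        integral_const_mul, integral_const_mul, hq1, hpbar1]
      ring
    have hR : ∀ᵐ x ∂μ, x ∈ S → 0 < r x := by
      filter_upwards [habs] with x hx hxS
      rcases (hr0 x).lt_or_eq with h | h
      · exact h
      · exfalso
        have hpx : 0 < p x := hxS
        have h' : (0 : ℝ) = lam * q x + (1 - lam) * pbar x := h
        have h2 : (0 : ℝ) ≤ (1 - lam) * pbar x := mul_nonneg (by linarith) (hpbar0 x)
        rcases (hq0 x).lt_or_eq with hq | hq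
        · have h3 := mul_pos hlam0 hq
          linarith
        · exact absurd (hx hq.symm) (ne_of_gt hpx)
    set G : X → ℝ := fun x => r x * f (p x / r x) with hGdef
    set L : X → ℝ := fun x =>
      S.indicator (fun x => f (1 / lam) * r x + c * (p x - r x / lam)) x
        + Sᶜ.indicator (fun x => f 0 * r x) x with hLdef
    have hInt1 : Integrable (S.indicator
        (fun x => f (1 / lam) * r x + c * (p x - r x / lam))) μ :=
      ((hrInt.const_mul (f (1 / lam))).add
        ((hpInt.sub (hrInt.div_const lam)).const_mul c)).indicator hSm
    have hInt2 : Integrable (Sᶜ.indicator (fun x => f 0 * r x)) μ :=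
      (hrInt.const_mul (f 0)).indicator hSm.compl
    have hLInt : Integrable L μ := hInt1.add hInt2
    have hptwise : ∀ᵐ x ∂μ, L x ≤ G x := by
      filter_upwards [hR] with x hrx
      by_cases hxS : x ∈ S
      · have hrpos := hrx hxS
        have hu0 : 0 ≤ p x / r x := div_nonneg (hp0 x) hrpos.le
        have hnot : x ∉ Sᶜ := fun h => h hxS
        have hLx : L x = f (1 / lam) * r x + c * (p x - r x / lam) := by
          rw [hLdef]
          simp only [Set.indicator_of_mem hxS, Set.indicator_of_notMem hnot, add_zero]
        rw [hLx, hGdef]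
        have h2 : f (1 / lam) * r x + c * (p x - r x / lam)
            = r x * (f (1 / lam) + c * (p x / r x - 1 / lam)) := by
          field_simp
        rw [h2]
        exact mul_le_mul_of_nonneg_left (hcle (p x / r x) hu0) hrpos.le
      · have hpx : p x = 0 := le_antisymm (not_lt.mp hxS) (hp0 x)
        have hLx : L x = f 0 * r x := by
          rw [hLdef]
          simp only [Set.indicator_of_notMem hxS, zero_add]
          exact Set.indicator_of_mem (Set.mem_compl hxS) _
        have hGx : G x = f 0 * r x := by
          rw [hGdef]; simp only [hpx, zero_div]; ring
        rw [hLx, hGx]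
    set s : ℝ := ∫ x in S, q x ∂μ with hsdef
    have hrS : ∫ x in S, r x ∂μ = lam * s := by
      rw [hrdef]
      rw [integral_add (hqInt.const_mul lam).integrableOn
        (hpbarInt.const_mul (1 - lam)).integrableOn, integral_const_mul, integral_const_mul,
        hpbarS, hsdef]
      ring
    have hrSc : ∫ x in Sᶜ, r x ∂μ = 1 - lam * s := by
      have := integral_add_compl hSm hrInt
      rw [hrS, hrint1] at this
      linarith
    have hs1 : s ≤ 1 := by
      rw [hsdef, ← hq1]
      exact setIntegral_le_integral hqInt (Filter.Eventually.of_forall hq0)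
    have hLval : ∫ x, L x ∂μ
        = lam * s * f (1 / lam) + c * (1 - s) + (1 - lam * s) * f 0 := by
      rw [hLdef]
      rw [integral_add hInt1 hInt2, integral_indicator hSm, integral_indicator hSm.compl]
      have hA : Integrable (fun x => f (1 / lam) * r x) (μ.restrict S) :=
        (hrInt.const_mul _).integrableOn
      have hB : Integrable (fun x => c * (p x - r x / lam)) (μ.restrict S) :=
        ((hpInt.sub (hrInt.div_const lam)).const_mul c).integrableOn
      have hB' : Integrable (fun x => p x - r x / lam) (μ.restrict S) :=
        (hpInt.sub (hrInt.div_const lam)).integrableOn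
      have hD : Integrable (fun x => r x / lam) (μ.restrict S) :=
        (hrInt.div_const lam).integrableOn
      rw [integral_add hA hB, integral_const_mul, integral_const_mul, integral_const_mul,
        integral_sub hpInt.integrableOn hD, integral_div, hpS, hrS, hrSc]
      field_simp
    have htargetL : lam * f (1 / lam) + (1 - lam) * f 0 ≤ ∫ x, L x ∂μ := by
      rw [hLval]
      nlinarith [mul_nonneg (sub_nonneg.mpr hs1) (sub_nonneg.mpr hc0'.le)]
    have hLG : ∫ x, L x ∂μ ≤ ∫ x, G x ∂μ := integral_mono_ae hLInt hint hptwise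
    refine ⟨le_trans htargetL hLG, ?_⟩
    intro heq
    have h1 : ∫ x, L x ∂μ = ∫ x, G x ∂μ := le_antisymm hLG (by rw [heq]; exact htargetL)
    have h1' : ∫ x, L x ∂μ = lam * f (1 / lam) + (1 - lam) * f 0 := by rw [h1, heq]
    have hfac : (1 - s) * (c - lam * (f (1 / lam) - f 0)) = 0 := by
      rw [hLval] at h1'
      linear_combination h1'
    have hs : s = 1 := by
      rcases mul_eq_zero.mp hfac with h | h
      · linarith
      · exfalso; linarith
    have hGeqL : (fun x => G x - L x) =ᵐ[μ] 0 := by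
      rw [← integral_eq_zero_iff_of_nonneg_ae
        (hptwise.mono fun x hx => sub_nonneg.mpr hx) (hint.sub hLInt)]
      rw [integral_sub hint hLInt, h1, sub_self]
    have hqSc : ∀ᵐ x ∂μ, x ∈ Sᶜ → q x = 0 := by
      have h2 : ∫ x in Sᶜ, q x ∂μ = 0 := by
        have := integral_add_compl hSm hqInt
        rw [hq1, ← hsdef] at this
        linarith
      have h3 := (integral_eq_zero_iff_of_nonneg_ae
        (Filter.Eventually.of_forall hq0 : 0 ≤ᵐ[μ.restrict Sᶜ] q)
        hqInt.integrableOn).mp h2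
      exact (ae_restrict_iff' hSm.compl).mp (h3.mono fun x hx => hx)
    filter_upwards [hApbar, hR, hGeqL, hqSc] with x h1x h2x h3x h4x
    by_cases hxS : x ∈ S
    · have hrpos := h2x hxS
      have hpb := h1x hxS
      have hu0 : 0 ≤ p x / r x := div_nonneg (hp0 x) hrpos.le
      have hnot : x ∉ Sᶜ := fun h => h hxS
      have hLx : L x = f (1 / lam) * r x + c * (p x - r x / lam) := by
        rw [hLdef]
        simp only [Set.indicator_of_mem hxS, Set.indicator_of_notMem hnot, add_zero]
      have hGLx : r x * f (p x / r x) = f (1 / lam) * r x + c * (p x - r x / lam) := by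
        have hz : G x - L x = 0 := h3x
        rw [hLx] at hz
        have : G x = r x * f (p x / r x) := by rw [hGdef]
        linarith [this ▸ hz]
      have hexp : f (1 / lam) * r x + c * (p x - r x / lam)
          = r x * (f (1 / lam) + c * (p x / r x - 1 / lam)) := by
        field_simp
      rw [hexp] at hGLx
      have hfu : f (p x / r x) = f (1 / lam) + c * (p x / r x - 1 / lam) :=
        mul_left_cancel₀ (ne_of_gt hrpos) hGLx
      have hueq : p x / r x = 1 / lam := by
        by_contra hne2
        exact (hclt _ hu0 hne2).ne' hfu
      have hrq : r x = lam * q x + (1 - lam) * pbar x := by rw [hrdef]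
      have hplam : p x * lam = r x := by
        rw [div_eq_div_iff (ne_of_gt hrpos) (ne_of_gt hlam0)] at hueq
        linarith
      have : lam * q x = lam * p x := by
        rw [hrq, hpb] at hplam
        linarith
      exact (mul_left_cancel₀ (ne_of_gt hlam0) this).symm ▸ rfl
    · have hq : q x = 0 := h4x hxS
      have hp : p x = 0 := le_antisymm (not_lt.mp hxS) (hp0 x)
      rw [hq, hp]
  refine ⟨?_, fun q a b c' d e => (key q a b c' d e).1, fun q a b c' d e => (key q a b c' d e).2,
    ?_, ?_⟩
  · -- part (1)
    have h1f : (fun x => (lam * p x + (1 - lam) * pbar x) *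
        f (p x / (lam * p x + (1 - lam) * pbar x)))
        =ᵐ[μ] fun x => lam * f (1 / lam) * p x + (1 - lam) * f 0 * pbar x := by
      filter_upwards [hdisj] with x hx
      rcases (hp0 x).lt_or_eq with hp | hp
      · have hpb : pbar x = 0 := by
          rcases mul_eq_zero.mp hx with h | h
          · exact absurd h (ne_of_gt hp)
          · exact h
        have hdiv : p x / (lam * p x + (1 - lam) * pbar x) = 1 / lam := by
          rw [hpb]
          rw [mul_zero, add_zero]
          rw [div_eq_div_iff (by positivity) (ne_of_gt hlam0)]
          ring
        rw [hdiv, hpb]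
        ring
      · have hval : (lam * 0 + (1 - lam) * pbar x) *
            f ((0 : ℝ) / (lam * 0 + (1 - lam) * pbar x))
            = lam * f (1 / lam) * 0 + (1 - lam) * f 0 * pbar x := by
          rw [mul_zero, zero_add, zero_div]
          ring
        rw [← hp]
        exact hval
    rw [integral_congr_ae h1f,
      integral_add (hpInt.const_mul _) (hpbarInt.const_mul _),
      integral_const_mul, integral_const_mul, hp1, hpbar1]
    ring
  · -- part (4a)
    have hz : ∀ x, p x * f (p x / p x) = 0 := by
      intro x
      rcases (hp0 x).lt_or_eq with h | h
      · rw [div_self (ne_of_gt h), hf1, mul_zero]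
      · rw [← h, zero_mul]
    simp only [hz, integral_zero]
  · -- part (4b)
    obtain ⟨_, hc1le, _⟩ := (exists_support_slope hf one_pos).choose_spec
    set c1 := (exists_support_slope hf one_pos).choose with hc1def
    intro q hqm hq0 hq1 habs hint
    have hqInt : Integrable q μ := by
      by_contra h; rw [integral_undef h] at hq1; norm_num at hq1
    have hL4Int : Integrable (fun x => c1 * (p x - q x)) μ := (hpInt.sub hqInt).const_mul c1
    have hmono : ∀ᵐ x ∂μ, c1 * (p x - q x) ≤ q x * f (p x / q x) := by
      filter_upwards [habs] with x hx
      rcases (hq0 x).lt_or_eq with h | h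
      · have hu0 : 0 ≤ p x / q x := div_nonneg (hp0 x) h.le
        have hkey : c1 * (p x - q x) = q x * (f 1 + c1 * (p x / q x - 1)) := by
          rw [hf1]
          field_simp
          ring
        rw [hkey]
        exact mul_le_mul_of_nonneg_left (hc1le _ hu0) h.le
      · have hpx : p x = 0 := hx h.symm
        rw [hpx, ← h]
        simp
    have hintL : ∫ x, c1 * (p x - q x) ∂μ = 0 := by
      rw [integral_const_mul, integral_sub hpInt hqInt, hp1, hq1, sub_self, mul_zero]
    calc (0 : ℝ) = ∫ x, c1 * (p x - q x) ∂μ := hintL.symm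
      _ ≤ ∫ x, q x * f (p x / q x) ∂μ := integral_mono_ae hL4Int hint hmono
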